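/- Let ι : A → H be an inclusion of Hopf algebras, and let π : H → C := H/HA⁻ be the quotient by the ideal generated by the augmentation ideal A⁻ = A ∩ ker ε. Then the left adjoint coaction x ↦ x₁ S(x₃) ⊗ x₂ of H on itself descends through π to a coaction of H on C. -/

import Mathlib

open TensorProduct

variable {k A H : Type*}

/-- The left adjoint coaction `x ↦ x₁ S(x₃) ⊗ x₂` of a Hopf algebra on itself. -/
noncomputable def leftAdjointCoaction [CommSemiring k] [Semiring H] [HopfAlgebra k H] :
    H →ₗ[k] H ⊗[k] H :=
  TensorProduct.map (LinearMap.mul' k H) LinearMap.id ∘ₗ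
    (TensorProduct.assoc k H H H).symm.toLinearMap ∘ₗ
    TensorProduct.map LinearMap.id
      (TensorProduct.map (HopfAlgebra.antipode (R := k)) LinearMap.id) ∘ₗ
    TensorProduct.map LinearMap.id (TensorProduct.comm k H H).toLinearMap ∘ₗ
    TensorProduct.map LinearMap.id (Coalgebra.comul (R := k)) ∘ₗ
    Coalgebra.comul (R := k)

open Coalgebra

section Infra
variable [CommSemiring k] [Semiring H] [Bialgebra k H]
  {M : Type*} [AddCommMonoid M] [Module k M]

lemma helper1 {ιr : Type*} (f : H →ₗ[k] M) {x : H} (r : Coalgebra.Repr k x ιr) :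
    ∑ i ∈ r.index, counit (R := k) (r.left i) • f (r.right i) = f x := by
  have h2 := congrArg ((TensorProduct.lid k M).toLinearMap ∘ₗ TensorProduct.map (LinearMap.id (R := k) (M := k)) f)
    (Coalgebra.sum_counit_tmul_eq (R := k) r)
  simpa only [map_sum, LinearMap.coe_comp, Function.comp_apply, LinearEquiv.coe_coe,
    TensorProduct.map_tmul, LinearMap.id_coe, id_eq, TensorProduct.lid_tmul, one_smul] using h2

lemma helper2 {ιr : Type*} (f : H →ₗ[k] M) {x : H} (r : Coalgebra.Repr k x ιr) :
    ∑ i ∈ r.index, counit (R := k) (r.right i) • f (r.left i) = f x := by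
  have h2 := congrArg ((TensorProduct.rid k M).toLinearMap ∘ₗ TensorProduct.map f (LinearMap.id (R := k) (M := k)))
    (Coalgebra.sum_tmul_counit_eq (R := k) r)
  simpa only [map_sum, LinearMap.coe_comp, Function.comp_apply, LinearEquiv.coe_coe,
    TensorProduct.map_tmul, LinearMap.id_coe, id_eq, TensorProduct.rid_tmul, one_smul] using h2

lemma tri_switch {ιr κ Λ : Type*} (f : H →ₗ[k] H →ₗ[k] H →ₗ[k] M) {x : H} (r : Coalgebra.Repr k x ιr)
    (a₁ : (i : ιr) → Coalgebra.Repr k (r.left i) κ)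
    (a₂ : (i : ιr) → Coalgebra.Repr k (r.right i) Λ) :
    ∑ i ∈ r.index, ∑ j ∈ (a₁ i).index,
      f ((a₁ i).left j) ((a₁ i).right j) (r.right i)
    = ∑ i ∈ r.index, ∑ j ∈ (a₂ i).index,
      f (r.left i) ((a₂ i).left j) ((a₂ i).right j) := by
  set F : H ⊗[k] (H ⊗[k] H) →ₗ[k] M :=
    TensorProduct.lift ((TensorProduct.uncurry (RingHom.id k) H H M) ∘ₗ f) with hF
  have hFa : ∀ u v w : H, F (u ⊗ₜ (v ⊗ₜ w)) = f u v w := by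
    intro u v w; simp [hF]
  have h2 := congrArg F (Coalgebra.sum_tmul_tmul_eq (R := k) r a₁ a₂)
  simpa [map_sum, hFa] using h2

/-- Representation of a product from representations of factors. -/
noncomputable def Coalgebra.Repr.mulRepr {ι1 ι2 : Type*} {x y : H} (r1 : Coalgebra.Repr k x ι1)
    (r2 : Coalgebra.Repr k y ι2) : Coalgebra.Repr k (x * y) (ι1 × ι2) where
  index := r1.index ×ˢ r2.index
  left p := r1.left p.1 * r2.left p.2
  right p := r1.right p.1 * r2.right p.2
  eq := by
    rw [Bialgebra.comul_mul, ← r1.eq, ← r2.eq, Finset.sum_mul_sum, ← Finset.sum_product']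
    simp [Algebra.TensorProduct.tmul_mul_tmul]

end Infra

section InfraMap
variable [CommSemiring k] [Semiring A] [Semiring H] [Bialgebra k A] [Bialgebra k H]

/-- Representation of the image under a bialgebra hom. -/
noncomputable def Coalgebra.Repr.mapRepr {ιr : Type*} (f : A →ₐc[k] H) {a : A} (r : Coalgebra.Repr k a ιr) :
    Coalgebra.Repr k (f a) ιr where
  index := r.index
  left i := f (r.left i)
  right i := f (r.right i)
  eq := by
    have h2 := LinearMap.congr_fun (CoalgHomClass.map_comp_comul (F := A →ₐc[k] H) f) a
    simp only [LinearMap.coe_comp, Function.comp_apply, BialgHom.coe_toLinearMap] at h2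
    rw [← h2, ← r.eq, map_sum]
    simp [BialgHom.coe_toLinearMap]

@[simp] lemma Coalgebra.Repr.mapRepr_index {ιr : Type*} (ι : A →ₐc[k] H) {a : A} (r : Coalgebra.Repr k a ιr) :
    (r.mapRepr ι).index = r.index := rfl

end InfraMap

section Anti
variable [CommSemiring k] [Semiring H] [HopfAlgebra k H]

open HopfAlgebra LinearMap

/-- trilinear map `(u,v,w) ↦ α u * (v * γ w)`. -/
noncomputable def triMul (α γ : H →ₗ[k] H) : H →ₗ[k] H →ₗ[k] H →ₗ[k] H :=
  LinearMap.mk₂ k (fun u v => mulLeft k (α u) ∘ₗ mulLeft k v ∘ₗ γ)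
    (fun u u' v => by ext w; simp [add_mul])
    (fun c u v => by ext w; simp [smul_mul_assoc])
    (fun u v v' => by ext w; simp [add_mul, mul_add])
    (fun c u v => by ext w; simp [mul_smul_comm, smul_mul_assoc])

@[simp] lemma triMul_apply (α γ : H →ₗ[k] H) (u v w : H) :
    triMul α γ u v w = α u * (v * γ w) := rfl

lemma sum_antipode_mul_mul {ι1 ι2 : Type*} {x y : H} (r1 : Coalgebra.Repr k x ι1) (r2 : Coalgebra.Repr k y ι2) :
    ∑ p ∈ r1.index, ∑ q ∈ r2.index,
      antipode (R := k) (r1.left p * r2.left q) * (r1.right p * r2.right q)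
    = (counit (R := k) x * counit (R := k) y) • (1 : H) := by
  have hs := HopfAlgebra.sum_antipode_mul_eq_smul (r1.mulRepr r2)
  simp only [Coalgebra.Repr.mulRepr] at hs
  rw [Finset.sum_product] at hs
  simpa [Bialgebra.counit_mul] using hs

lemma sum_swap4 {ι₁ ι₂ ι₃ ι₄ : Type*} {M : Type*} [AddCommMonoid M]
    (s : Finset ι₁) (P : ι₁ → Finset ι₂) (t : Finset ι₃) (Q : ι₃ → Finset ι₄)
    (F : ι₁ → ι₂ → ι₃ → ι₄ → M) :
    ∑ i ∈ s, ∑ p ∈ P i, ∑ j ∈ t, ∑ q ∈ Q j, F i p j q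
    = ∑ j ∈ t, ∑ q ∈ Q j, ∑ i ∈ s, ∑ p ∈ P i, F i p j q := by
  calc ∑ i ∈ s, ∑ p ∈ P i, ∑ j ∈ t, ∑ q ∈ Q j, F i p j q
      = ∑ i ∈ s, ∑ j ∈ t, ∑ p ∈ P i, ∑ q ∈ Q j, F i p j q :=
        Finset.sum_congr rfl fun i _ => Finset.sum_comm
    _ = ∑ j ∈ t, ∑ i ∈ s, ∑ p ∈ P i, ∑ q ∈ Q j, F i p j q := Finset.sum_comm
    _ = ∑ j ∈ t, ∑ i ∈ s, ∑ q ∈ Q j, ∑ p ∈ P i, F i p j q :=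
        Finset.sum_congr rfl fun j _ => Finset.sum_congr rfl fun i _ => Finset.sum_comm
    _ = ∑ j ∈ t, ∑ q ∈ Q j, ∑ i ∈ s, ∑ p ∈ P i, F i p j q :=
        Finset.sum_congr rfl fun j _ => Finset.sum_comm

lemma antipode_mul' (x y : H) :
    antipode (R := k) (x * y) = antipode (R := k) y * antipode (R := k) x := by
  let rx := ℛ k x
  let ry := ℛ k y
  let rx1 : ∀ i, Coalgebra.Repr k (rx.left i) (H × H) := fun i => ℛ k _
  let rx2 : ∀ i, Coalgebra.Repr k (rx.right i) (H × H) := fun i => ℛ k _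
  let ry1 : ∀ j, Coalgebra.Repr k (ry.left j) (H × H) := fun j => ℛ k _
  let ry2 : ∀ j, Coalgebra.Repr k (ry.right j) (H × H) := fun j => ℛ k _
  have Eval1 :
      (∑ i ∈ rx.index, ∑ p ∈ (rx2 i).index, ∑ j ∈ ry.index, ∑ q ∈ (ry2 j).index,
        antipode (R := k) (rx.left i * ry.left j) *
          ((rx2 i).left p * (((ry2 j).left q * antipode (R := k) ((ry2 j).right q)) *
            antipode (R := k) ((rx2 i).right p))))
      = antipode (R := k) (x * y) := by
    calc ∑ i ∈ rx.index, ∑ p ∈ (rx2 i).index, ∑ j ∈ ry.index, ∑ q ∈ (ry2 j).index,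
          antipode (R := k) (rx.left i * ry.left j) *
            ((rx2 i).left p * (((ry2 j).left q * antipode (R := k) ((ry2 j).right q)) *
              antipode (R := k) ((rx2 i).right p)))
        = ∑ i ∈ rx.index, ∑ p ∈ (rx2 i).index, ∑ j ∈ ry.index,
            counit (R := k) (ry.right j) • (antipode (R := k) (rx.left i * ry.left j) *
              ((rx2 i).left p * antipode (R := k) ((rx2 i).right p))) := by
          refine Finset.sum_congr rfl fun i _ => Finset.sum_congr rfl fun p _ =>
            Finset.sum_congr rfl fun j _ => ?_
          rw [← Finset.mul_sum, ← Finset.mul_sum, ← Finset.sum_mul,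
            HopfAlgebra.sum_mul_antipode_eq_smul (ry2 j), smul_mul_assoc, one_mul,
            mul_smul_comm, mul_smul_comm]
      _ = ∑ i ∈ rx.index, ∑ p ∈ (rx2 i).index,
            antipode (R := k) (rx.left i * y) *
              ((rx2 i).left p * antipode (R := k) ((rx2 i).right p)) := by
          refine Finset.sum_congr rfl fun i _ => Finset.sum_congr rfl fun p _ => ?_
          have := helper2 (mulRight k ((rx2 i).left p * antipode (R := k) ((rx2 i).right p))
            ∘ₗ antipode (R := k) ∘ₗ mulLeft k (rx.left i)) ry
          simpa [mul_assoc] using this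
      _ = ∑ i ∈ rx.index, counit (R := k) (rx.right i) • antipode (R := k) (rx.left i * y) := by
          refine Finset.sum_congr rfl fun i _ => ?_
          rw [← Finset.mul_sum, HopfAlgebra.sum_mul_antipode_eq_smul (rx2 i),
            mul_smul_comm, mul_one]
      _ = antipode (R := k) (x * y) := by
          have := helper2 (antipode (R := k) ∘ₗ mulRight k y) rx
          simpa [mul_assoc] using this
  have Eval2 :
      (∑ i ∈ rx.index, ∑ p ∈ (rx2 i).index, ∑ j ∈ ry.index, ∑ q ∈ (ry2 j).index,
        antipode (R := k) (rx.left i * ry.left j) *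
          ((rx2 i).left p * (((ry2 j).left q * antipode (R := k) ((ry2 j).right q)) *
            antipode (R := k) ((rx2 i).right p))))
      = antipode (R := k) y * antipode (R := k) x := by
    calc ∑ i ∈ rx.index, ∑ p ∈ (rx2 i).index, ∑ j ∈ ry.index, ∑ q ∈ (ry2 j).index,
          antipode (R := k) (rx.left i * ry.left j) *
            ((rx2 i).left p * (((ry2 j).left q * antipode (R := k) ((ry2 j).right q)) *
              antipode (R := k) ((rx2 i).right p)))
        = ∑ i ∈ rx.index, ∑ p ∈ (rx2 i).index, ∑ j ∈ ry.index, ∑ q ∈ (ry1 j).index,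
            antipode (R := k) (rx.left i * (ry1 j).left q) *
              ((rx2 i).left p * (((ry1 j).right q * antipode (R := k) (ry.right j)) *
                antipode (R := k) ((rx2 i).right p))) := by
          refine Finset.sum_congr rfl fun i _ => Finset.sum_congr rfl fun p _ => ?_
          have := tri_switch
            (triMul (mulRight k ((rx2 i).left p) ∘ₗ antipode (R := k) ∘ₗ mulLeft k (rx.left i))
              (mulRight k (antipode (R := k) ((rx2 i).right p)) ∘ₗ antipode (R := k)))
            ry ry1 ry2
          simp only [triMul_apply, LinearMap.coe_comp, Function.comp_apply,
            LinearMap.mulLeft_apply, LinearMap.mulRight_apply] at this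
          simp only [mul_assoc] at this ⊢
          exact this.symm
      _ = ∑ j ∈ ry.index, ∑ q ∈ (ry1 j).index, ∑ i ∈ rx.index, ∑ p ∈ (rx2 i).index,
            antipode (R := k) (rx.left i * (ry1 j).left q) *
              ((rx2 i).left p * (((ry1 j).right q * antipode (R := k) (ry.right j)) *
                antipode (R := k) ((rx2 i).right p))) :=
          sum_swap4 _ _ _ _ _
      _ = ∑ j ∈ ry.index, ∑ q ∈ (ry1 j).index, ∑ i ∈ rx.index, ∑ p ∈ (rx1 i).index,
            antipode (R := k) ((rx1 i).left p * (ry1 j).left q) *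
              ((rx1 i).right p * (((ry1 j).right q * antipode (R := k) (ry.right j)) *
                antipode (R := k) (rx.right i))) := by
          refine Finset.sum_congr rfl fun j _ => Finset.sum_congr rfl fun q _ => ?_
          have := tri_switch
            (triMul (antipode (R := k) ∘ₗ mulRight k ((ry1 j).left q))
              (mulLeft k ((ry1 j).right q * antipode (R := k) (ry.right j)) ∘ₗ
                antipode (R := k)))
            rx rx1 rx2
          simp only [triMul_apply, LinearMap.coe_comp, Function.comp_apply,
            LinearMap.mulLeft_apply, LinearMap.mulRight_apply] at this
          exact this.symm
      _ = ∑ j ∈ ry.index, ∑ i ∈ rx.index, ∑ q ∈ (ry1 j).index, ∑ p ∈ (rx1 i).index,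
            antipode (R := k) ((rx1 i).left p * (ry1 j).left q) *
              ((rx1 i).right p * (((ry1 j).right q * antipode (R := k) (ry.right j)) *
                antipode (R := k) (rx.right i))) :=
          Finset.sum_congr rfl fun j _ => Finset.sum_comm
      _ = ∑ j ∈ ry.index, ∑ i ∈ rx.index,
            (counit (R := k) (rx.left i) * counit (R := k) (ry.left j)) •
              (antipode (R := k) (ry.right j) * antipode (R := k) (rx.right i)) := by
          refine Finset.sum_congr rfl fun j _ => Finset.sum_congr rfl fun i _ => ?_
          rw [Finset.sum_comm]
          calc ∑ p ∈ (rx1 i).index, ∑ q ∈ (ry1 j).index,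
                antipode (R := k) ((rx1 i).left p * (ry1 j).left q) *
                  ((rx1 i).right p * (((ry1 j).right q * antipode (R := k) (ry.right j)) *
                    antipode (R := k) (rx.right i)))
              = ∑ p ∈ (rx1 i).index, ∑ q ∈ (ry1 j).index,
                  (antipode (R := k) ((rx1 i).left p * (ry1 j).left q) *
                    ((rx1 i).right p * (ry1 j).right q)) *
                  (antipode (R := k) (ry.right j) * antipode (R := k) (rx.right i)) := by
                refine Finset.sum_congr rfl fun p _ => Finset.sum_congr rfl fun q _ => ?_
                simp only [mul_assoc]
            _ = (∑ p ∈ (rx1 i).index, ∑ q ∈ (ry1 j).index,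
                  antipode (R := k) ((rx1 i).left p * (ry1 j).left q) *
                    ((rx1 i).right p * (ry1 j).right q)) *
                  (antipode (R := k) (ry.right j) * antipode (R := k) (rx.right i)) := by
                simp only [← Finset.sum_mul]
            _ = (counit (R := k) (rx.left i) * counit (R := k) (ry.left j)) •
                  (antipode (R := k) (ry.right j) * antipode (R := k) (rx.right i)) := by
                rw [sum_antipode_mul_mul (rx1 i) (ry1 j), smul_mul_assoc, one_mul]
      _ = ∑ j ∈ ry.index, counit (R := k) (ry.left j) •
            (antipode (R := k) (ry.right j) * antipode (R := k) x) := by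
          refine Finset.sum_congr rfl fun j _ => ?_
          have h1 : ∀ i ∈ rx.index,
              (counit (R := k) (rx.left i) * counit (R := k) (ry.left j)) •
                (antipode (R := k) (ry.right j) * antipode (R := k) (rx.right i))
              = counit (R := k) (ry.left j) • (counit (R := k) (rx.left i) •
                  (antipode (R := k) (ry.right j) * antipode (R := k) (rx.right i))) := by
            intro i _; rw [mul_comm, mul_smul]
          rw [Finset.sum_congr rfl h1, ← Finset.smul_sum]
          congr 1
          have := helper1 (mulLeft k (antipode (R := k) (ry.right j)) ∘ₗ antipode (R := k)) rx
          simpa [mul_assoc] using this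
      _ = antipode (R := k) y * antipode (R := k) x := by
          have := helper1 (mulRight k (antipode (R := k) x) ∘ₗ antipode (R := k)) ry
          simpa [mul_assoc] using this
  exact Eval1.symm.trans Eval2

end Anti

section MapAntipode
variable [CommSemiring k] [Semiring A] [Semiring H] [HopfAlgebra k A] [HopfAlgebra k H]

open HopfAlgebra LinearMap

lemma counit_map (f : A →ₐc[k] H) (a : A) :
    counit (R := k) (f a) = counit (R := k) a := by
  have := LinearMap.congr_fun (CoalgHomClass.counit_comp (F := A →ₐc[k] H) f) a
  simpa [BialgHom.coe_toLinearMap] using this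

lemma sum_mul_antipode_map {ιr : Type*} (f : A →ₐc[k] H) {a : A} (r : Coalgebra.Repr k a ιr) :
    ∑ i ∈ r.index, f (r.left i) * antipode (R := k) (f (r.right i))
    = counit (R := k) a • (1 : H) := by
  have := HopfAlgebra.sum_mul_antipode_eq_smul (r.mapRepr f)
  simp only [Coalgebra.Repr.mapRepr] at this
  simpa [counit_map] using this

/-- trilinear map `(u,v,w) ↦ α u * (β v * γ w)` with domain `A`. -/
noncomputable def triMul3 (α β γ : A →ₗ[k] H) : A →ₗ[k] A →ₗ[k] A →ₗ[k] H :=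
  LinearMap.mk₂ k (fun u v => mulLeft k (α u) ∘ₗ mulLeft k (β v) ∘ₗ γ)
    (fun u u' v => by ext w; simp [add_mul])
    (fun c u v => by ext w; simp [smul_mul_assoc])
    (fun u v v' => by ext w; simp [add_mul, mul_add])
    (fun c u v => by ext w; simp [mul_smul_comm, smul_mul_assoc])

@[simp] lemma triMul3_apply (α β γ : A →ₗ[k] H) (u v w : A) :
    triMul3 α β γ u v w = α u * (β v * γ w) := rfl

lemma map_antipode' (f : A →ₐc[k] H) (a : A) :
    f (antipode (R := k) a) = antipode (R := k) (f a) := by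
  let r := ℛ k a
  let r1 : ∀ i, Coalgebra.Repr k (r.left i) (A × A) := fun i => ℛ k _
  let r2 : ∀ i, Coalgebra.Repr k (r.right i) (A × A) := fun i => ℛ k _
  have Eval1 :
      (∑ i ∈ r.index, ∑ j ∈ (r2 i).index,
        f (antipode (R := k) (r.left i)) *
          (f ((r2 i).left j) * antipode (R := k) (f ((r2 i).right j))))
      = f (antipode (R := k) a) := by
    calc ∑ i ∈ r.index, ∑ j ∈ (r2 i).index,
          f (antipode (R := k) (r.left i)) *
            (f ((r2 i).left j) * antipode (R := k) (f ((r2 i).right j)))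
        = ∑ i ∈ r.index, counit (R := k) (r.right i) • f (antipode (R := k) (r.left i)) := by
          refine Finset.sum_congr rfl fun i _ => ?_
          rw [← Finset.mul_sum, sum_mul_antipode_map f (r2 i), mul_smul_comm, mul_one]
      _ = f (antipode (R := k) a) := by
          have := helper2 ((f : A →ₗ[k] H) ∘ₗ antipode (R := k)) r
          simpa [BialgHom.coe_toLinearMap] using this
  have Eval2 :
      (∑ i ∈ r.index, ∑ j ∈ (r2 i).index,
        f (antipode (R := k) (r.left i)) *
          (f ((r2 i).left j) * antipode (R := k) (f ((r2 i).right j))))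
      = antipode (R := k) (f a) := by
    calc ∑ i ∈ r.index, ∑ j ∈ (r2 i).index,
          f (antipode (R := k) (r.left i)) *
            (f ((r2 i).left j) * antipode (R := k) (f ((r2 i).right j)))
        = ∑ i ∈ r.index, ∑ j ∈ (r1 i).index,
            f (antipode (R := k) ((r1 i).left j)) *
              (f ((r1 i).right j) * antipode (R := k) (f (r.right i))) := by
          have := tri_switch
            (triMul3 ((f : A →ₗ[k] H) ∘ₗ antipode (R := k)) (f : A →ₗ[k] H)
              (antipode (R := k) ∘ₗ (f : A →ₗ[k] H))) r r1 r2
          simp only [triMul3_apply, LinearMap.coe_comp, Function.comp_apply,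
            BialgHom.coe_toLinearMap] at this
          exact this.symm
      _ = ∑ i ∈ r.index, counit (R := k) (r.left i) • antipode (R := k) (f (r.right i)) := by
          refine Finset.sum_congr rfl fun i _ => ?_
          calc ∑ j ∈ (r1 i).index,
                f (antipode (R := k) ((r1 i).left j)) *
                  (f ((r1 i).right j) * antipode (R := k) (f (r.right i)))
              = ∑ j ∈ (r1 i).index,
                  f (antipode (R := k) ((r1 i).left j) * (r1 i).right j) *
                  antipode (R := k) (f (r.right i)) := by
                refine Finset.sum_congr rfl fun j _ => ?_
                rw [map_mul, mul_assoc]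
            _ = (∑ j ∈ (r1 i).index,
                  f (antipode (R := k) ((r1 i).left j) * (r1 i).right j)) *
                  antipode (R := k) (f (r.right i)) := (Finset.sum_mul _ _ _).symm
            _ = counit (R := k) (r.left i) • antipode (R := k) (f (r.right i)) := by
                rw [← map_sum, HopfAlgebra.sum_antipode_mul_eq_smul (r1 i), map_smul, map_one,
                  smul_mul_assoc, one_mul]
      _ = antipode (R := k) (f a) := by
          have := helper1 (antipode (R := k) ∘ₗ (f : A →ₗ[k] H)) r
          simpa [BialgHom.coe_toLinearMap] using this
  exact Eval1.symm.trans Eval2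

end MapAntipode

lemma beta_apply [CommSemiring k] [Semiring H] [HopfAlgebra k H] {ιr κ : Type*} {x : H}
    (r : Coalgebra.Repr k x ιr) (r2 : ∀ i, Coalgebra.Repr k (r.right i) κ) :
    leftAdjointCoaction (k := k) x
    = ∑ i ∈ r.index, ∑ j ∈ (r2 i).index,
        (r.left i * HopfAlgebra.antipode (R := k) ((r2 i).right j)) ⊗ₜ[k] (r2 i).left j := by
  rw [leftAdjointCoaction]
  simp only [LinearMap.coe_comp, Function.comp_apply, ← r.eq, map_sum, TensorProduct.map_tmul,
    LinearMap.id_coe, id_eq]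
  refine Finset.sum_congr rfl fun i _ => ?_
  rw [← (r2 i).eq]
  simp [TensorProduct.tmul_sum, map_sum]

open HopfAlgebra LinearMap

/-- Let `ι : A → H` be an inclusion of Hopf algebras, `I = H·A⁻` the left ideal generated
by the augmentation ideal of `A`, and `π : H → C = H/I` the quotient. Then the left adjoint
coaction `x ↦ x₁ S(x₃) ⊗ x₂` of `H` on itself descends through `π` to a coaction of `H`
on `C`. -/
theorem leftAdjointCoaction_descends [Field k] [Ring A] [Ring H]
    [HopfAlgebra k A] [HopfAlgebra k H]
    (ι : A →ₐc[k] H) (hι : Function.Injective ι) :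
    let I : Submodule k H :=
      Submodule.span k {y : H | ∃ h : H, ∃ a : A,
        Coalgebra.counit (R := k) a = 0 ∧ y = h * ι a}
    ∃ β' : (H ⧸ I) →ₗ[k] H ⊗[k] (H ⧸ I),
      β' ∘ₗ I.mkQ = TensorProduct.map LinearMap.id I.mkQ ∘ₗ leftAdjointCoaction (k := k) := by
  intro I
  have hπ : ∀ (x : H) (b : A),
      I.mkQ (x * ι b) = Coalgebra.counit (R := k) b • I.mkQ x := by
    intro x b
    have hmem : x * ι b - Coalgebra.counit (R := k) b • x ∈ I := by
      apply Submodule.subset_span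
      refine ⟨x, b - Coalgebra.counit (R := k) b • 1, ?_, ?_⟩
      · simp [Bialgebra.counit_one]
      · rw [map_sub, map_smul, map_one, mul_sub, mul_smul_comm, mul_one]
    rw [← sub_eq_zero, ← map_smul, ← map_sub, Submodule.mkQ_apply,
      Submodule.Quotient.mk_eq_zero]
    exact hmem
  have hker : I ≤ LinearMap.ker (TensorProduct.map LinearMap.id I.mkQ ∘ₗ
      leftAdjointCoaction (k := k)) := by
    refine Submodule.span_le.2 ?_
    rintro v ⟨h, a, ha, rfl⟩
    simp only [SetLike.mem_coe, LinearMap.mem_ker, LinearMap.coe_comp, Function.comp_apply]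
    let rh := ℛ k h
    let ra := ℛ k a
    let rh2 : ∀ i, Coalgebra.Repr k (rh.right i) (H × H) := fun i => ℛ k _
    let ra2 : ∀ j, Coalgebra.Repr k (ra.right j) (A × A) := fun j => ℛ k _
    have hb := beta_apply (rh.mulRepr (ra.mapRepr ι))
      (fun z => (rh2 z.1).mulRepr ((ra2 z.2).mapRepr ι))
    rw [hb]
    calc TensorProduct.map LinearMap.id I.mkQ
          (∑ z ∈ (rh.mulRepr (ra.mapRepr ι)).index,
            ∑ w ∈ ((rh2 z.1).mulRepr ((ra2 z.2).mapRepr ι)).index,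
              ((rh.mulRepr (ra.mapRepr ι)).left z *
                antipode (R := k) (((rh2 z.1).mulRepr ((ra2 z.2).mapRepr ι)).right w)) ⊗ₜ[k]
                ((rh2 z.1).mulRepr ((ra2 z.2).mapRepr ι)).left w)
        = ∑ i ∈ rh.index, ∑ j ∈ ra.index, ∑ p ∈ (rh2 i).index, ∑ q ∈ (ra2 j).index,
            ((rh.left i * ι (ra.left j)) *
              antipode (R := k) ((rh2 i).right p * ι ((ra2 j).right q))) ⊗ₜ[k]
              I.mkQ ((rh2 i).left p * ι ((ra2 j).left q)) := by
          simp only [Coalgebra.Repr.mulRepr, Coalgebra.Repr.mapRepr, map_sum,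
            TensorProduct.map_tmul, LinearMap.id_coe, id_eq]
          rw [Finset.sum_product]
          refine Finset.sum_congr rfl fun i _ => Finset.sum_congr rfl fun j _ => ?_
          rw [Finset.sum_product]
      _ = ∑ i ∈ rh.index, ∑ j ∈ ra.index, ∑ p ∈ (rh2 i).index, ∑ q ∈ (ra2 j).index,
            Coalgebra.counit (R := k) ((ra2 j).left q) •
              (((rh.left i * ι (ra.left j)) *
                (ι (antipode (R := k) ((ra2 j).right q)) *
                  antipode (R := k) ((rh2 i).right p))) ⊗ₜ[k]
                I.mkQ ((rh2 i).left p)) := by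
          refine Finset.sum_congr rfl fun i _ => Finset.sum_congr rfl fun j _ =>
            Finset.sum_congr rfl fun p _ => Finset.sum_congr rfl fun q _ => ?_
          rw [antipode_mul', map_antipode', hπ, TensorProduct.tmul_smul]
      _ = ∑ i ∈ rh.index, ∑ j ∈ ra.index, ∑ p ∈ (rh2 i).index,
            ((rh.left i * ι (ra.left j)) *
              (ι (antipode (R := k) (ra.right j)) *
                antipode (R := k) ((rh2 i).right p))) ⊗ₜ[k]
              I.mkQ ((rh2 i).left p) := by
          refine Finset.sum_congr rfl fun i _ => Finset.sum_congr rfl fun j _ =>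
            Finset.sum_congr rfl fun p _ => ?_
          have := helper1 (((TensorProduct.mk k H (H ⧸ I)).flip (I.mkQ ((rh2 i).left p))) ∘ₗ
            mulLeft k (rh.left i * ι (ra.left j)) ∘ₗ
            mulRight k (antipode (R := k) ((rh2 i).right p)) ∘ₗ
            (ι : A →ₗ[k] H) ∘ₗ antipode (R := k)) (ra2 j)
          simpa [BialgHom.coe_toLinearMap, mul_assoc] using this
      _ = ∑ i ∈ rh.index, ∑ p ∈ (rh2 i).index, ∑ j ∈ ra.index,
            ((rh.left i * ι (ra.left j)) *
              (ι (antipode (R := k) (ra.right j)) *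
                antipode (R := k) ((rh2 i).right p))) ⊗ₜ[k]
              I.mkQ ((rh2 i).left p) :=
          Finset.sum_congr rfl fun i _ => Finset.sum_comm
      _ = 0 := by
          refine Finset.sum_eq_zero fun i _ => Finset.sum_eq_zero fun p _ => ?_
          calc ∑ j ∈ ra.index,
                ((rh.left i * ι (ra.left j)) *
                  (ι (antipode (R := k) (ra.right j)) *
                    antipode (R := k) ((rh2 i).right p))) ⊗ₜ[k]
                  I.mkQ ((rh2 i).left p)
              = ∑ j ∈ ra.index,
                  (((TensorProduct.mk k H (H ⧸ I)).flip (I.mkQ ((rh2 i).left p))) ∘ₗ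
                    mulLeft k (rh.left i) ∘ₗ
                    mulRight k (antipode (R := k) ((rh2 i).right p)) ∘ₗ
                    (ι : A →ₗ[k] H))
                    (ra.left j * antipode (R := k) (ra.right j)) := by
                refine Finset.sum_congr rfl fun j _ => ?_
                simp [BialgHom.coe_toLinearMap, mul_assoc]
            _ = (((TensorProduct.mk k H (H ⧸ I)).flip (I.mkQ ((rh2 i).left p))) ∘ₗ
                    mulLeft k (rh.left i) ∘ₗ
                    mulRight k (antipode (R := k) ((rh2 i).right p)) ∘ₗ
                    (ι : A →ₗ[k] H))
                  (∑ j ∈ ra.index, ra.left j * antipode (R := k) (ra.right j)) :=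
                (map_sum _ _ _).symm
            _ = 0 := by
                rw [HopfAlgebra.sum_mul_antipode_eq_smul ra, ha, zero_smul, map_zero]
  exact ⟨I.liftQ _ hker, I.liftQ_mkQ _ hker⟩
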